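/- If a probability distribution (p_n, n ≥ 0) on the nonnegative integers with 0 < p_0 < 1 is log-convex (i.e., p_{n-1} p_{n+1} ≥ p_n² for all n ≥ 1), then it is geometrically infinitely divisible. -/

import Mathlib

open MeasureTheory Real Set

noncomputable section

/-- Convolution of two pmfs on ℕ. -/
def seqConv (f g : ℕ → ℝ) : ℕ → ℝ := fun n => ∑ k ∈ Finset.range (n + 1), f k * g (n - k)

/-- k-fold convolution power of a pmf on ℕ. -/
def seqConvPow (f : ℕ → ℝ) : ℕ → ℕ → ℝ
  | 0 => fun n => if n = 0 then 1 else 0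
  | k + 1 => seqConv f (seqConvPow f k)

/-- `f` is a probability mass function on ℕ. -/
def IsPMF (f : ℕ → ℝ) : Prop := (∀ n, 0 ≤ f n) ∧ ∑' n, f n = 1

/-- pmf of a geometric(p) random sum `X₁ + ⋯ + X_{N_p}` (N_p ≥ 1) of iid variables with pmf f. -/
def geomCompound (p : ℝ) (f : ℕ → ℝ) : ℕ → ℝ :=
  fun n => ∑' k : ℕ, p * (1 - p) ^ k * seqConvPow f (k + 1) n

/-- A distribution on ℕ is geometrically infinitely divisible. -/
def GID (q : ℕ → ℝ) : Prop :=
  ∀ p ∈ Set.Ioo (0 : ℝ) 1, ∃ f : ℕ → ℝ, IsPMF f ∧ ∀ n, q n = geomCompound p f n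

/-- Convolution of measures on ℝ (distribution of the sum of independent rv's). -/
def mconv (μ ν : Measure ℝ) : Measure ℝ :=
  Measure.map (fun x : ℝ × ℝ => x.1 + x.2) (μ.prod ν)

/-- k-fold convolution power of a measure on ℝ. -/
def mpow (μ : Measure ℝ) : ℕ → Measure ℝ
  | 0 => Measure.dirac 0
  | k + 1 => mconv μ (mpow μ k)

/-- A distribution on [0,∞) is geometrically infinitely divisible: for every p ∈ (0,1)
it is the distribution of a geometric(p) random sum of iid nonnegative rv's. -/
def GIDM (μ : Measure ℝ) : Prop :=
  ∀ p ∈ Set.Ioo (0 : ℝ) 1, ∃ ν : Measure ℝ, IsProbabilityMeasure ν ∧ ν (Set.Iio 0) = 0 ∧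
    μ = Measure.sum (fun k : ℕ => (ENNReal.ofReal (p * (1 - p) ^ k)) • mpow ν (k + 1))

/-- Laplace–Stieltjes transform of a measure on ℝ. -/
def lst (μ : Measure ℝ) (u : ℝ) : ℝ := ∫ x, Real.exp (-(u * x)) ∂μ

/-- pmf of the λ-Poisson mixture with mixing distribution μ. -/
def pmix (l : ℝ) (μ : Measure ℝ) (n : ℕ) : ℝ :=
  ∫ x, (l * x) ^ n * Real.exp (-(l * x)) / (n.factorial : ℝ) ∂μ

/-- μ is λ-quasi-geometrically infinitely divisible: its λ-Poisson mixture is g.i.d. -/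
def QGID (l : ℝ) (μ : Measure ℝ) : Prop := GID (pmix l μ)

/-- K(τ) = -φ'(τ)/φ(τ)² where φ is the LST of μ. -/
def Kfun (μ : Measure ℝ) (τ : ℝ) : ℝ := -(deriv (lst μ) τ) / (lst μ τ) ^ 2

/-- G is a probability generating function (on |z| ≤ 1). -/
def IsPGF (G : ℝ → ℝ) : Prop :=
  ∃ f : ℕ → ℝ, IsPMF f ∧ ∀ z : ℝ, |z| ≤ 1 → G z = ∑' n, f n * z ^ n

end

noncomputable section
namespace Stmt15Aux

def bseq (p : ℕ → ℝ) : ℕ → ℝ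
  | 0 => 0
  | n + 1 => (p (n + 1) - ∑ k ∈ (Finset.range n).attach, bseq p (k.1 + 1) * p (n - k.1)) / p 0
decreasing_by exact Nat.succ_lt_succ (Finset.mem_range.mp k.2)

def fseq (b : ℕ → ℝ) (r t : ℝ) : ℕ → ℝ
  | 0 => r
  | n + 1 => t * ∑ k ∈ (Finset.range (n + 1)).attach, b (k.1 + 1) * fseq b r t (n - k.1)
decreasing_by exact Nat.lt_succ_of_le (Nat.sub_le _ _)

lemma bseq_succ (p : ℕ → ℝ) (n : ℕ) :
    bseq p (n + 1) = (p (n + 1) - ∑ k ∈ Finset.range n, bseq p (k + 1) * p (n - k)) / p 0 := by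
  rw [bseq, ← Finset.sum_attach (Finset.range n) (fun k => bseq p (k + 1) * p (n - k))]

variable {p : ℕ → ℝ}

lemma bseq_zero : bseq p 0 = 0 := by rw [bseq]

lemma conv_hasSum {a b : ℕ → ℝ} (hann : ∀ n, 0 ≤ a n) (hbnn : ∀ n, 0 ≤ b n)
    (ha : Summable a) (hb : Summable b) :
    HasSum (seqConv a b) ((∑' n, a n) * ∑' n, b n) := by
  have ha' : Summable fun n => ‖a n‖ :=
    ha.congr fun n => (Real.norm_of_nonneg (hann n)).symm
  have hb' : Summable fun n => ‖b n‖ :=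
    hb.congr fun n => (Real.norm_of_nonneg (hbnn n)).symm
  exact hasSum_sum_range_mul_of_summable_norm ha' hb'


section Pos
variable (hpnn : ∀ n, 0 ≤ p n) (hpsum : ∑' n, p n = 1) (h0 : 0 < p 0) (h1 : p 0 < 1)
  (hlc : ∀ n : ℕ, p (n + 1) ^ 2 ≤ p n * p (n + 2))

include hpnn hpsum h1 hlc in
lemma p_one_pos : 0 < p 1 := by
  rcases lt_or_eq_of_le (hpnn 1) with h | h
  · exact h
  · exfalso
    have hz : ∀ n, p (n + 1) = 0 := by
      intro n
      induction n with
      | zero => exact h.symm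
      | succ m ih =>
        have := hlc (m + 1)
        rw [ih] at this
        nlinarith [hpnn (m + 2)]
    have : ∑' n, p n = p 0 := by
      apply tsum_eq_single 0
      intro n hn
      cases n with
      | zero => exact absurd rfl hn
      | succ m => exact hz m
    rw [hpsum] at this
    linarith

include hpnn hpsum h0 h1 hlc in
lemma p_pos : ∀ n, 0 < p n := by
  have h1p : 0 < p 1 := p_one_pos hpnn hpsum h1 hlc
  have key : ∀ n, 0 < p n ∧ 0 < p (n + 1) := by
    intro n
    induction n with
    | zero => exact ⟨h0, h1p⟩
    | succ m ih =>
      refine ⟨ih.2, ?_⟩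
      have := hlc m
      nlinarith [ih.1, ih.2, hpnn (m + 2)]
  exact fun n => (key n).1

include hpnn h0 h1 hlc in
lemma ratio_mono (hpos : ∀ n, 0 < p n) :
    ∀ m n, m ≤ n → p (m + 1) * p n ≤ p m * p (n + 1) := by
  intro m n hmn
  induction n with
  | zero =>
    have : m = 0 := Nat.le_zero.mp hmn
    subst this
    exact le_of_eq (mul_comm _ _)
  | succ k ih =>
    rcases Nat.lt_or_ge m (k + 1) with h | h
    · have ihk := ih (Nat.lt_succ_iff.mp h)
      have hk := hlc k
      nlinarith [mul_pos (hpos k) (hpos (k + 1)), mul_le_mul ihk hk (sq_nonneg _) (mul_nonneg (hpos m).le (hpos (k + 1)).le)]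
    · have : m = k + 1 := le_antisymm hmn h
      subst this
      linarith
end Pos

section Bseq
variable (h0 : 0 < p 0) (hpos : ∀ n, 0 < p n)
  (hrat : ∀ m n, m ≤ n → p (m + 1) * p n ≤ p m * p (n + 1))

include h0 in
lemma bseq_id : ∀ n, ∑ k ∈ Finset.range (n + 1), bseq p (k + 1) * p (n - k) = p (n + 1) := by
  intro n
  rw [Finset.sum_range_succ, Nat.sub_self, bseq_succ, div_mul_cancel₀ _ h0.ne']
  ring

include h0 hpos hrat in
lemma bseq_nonneg : ∀ n, 0 ≤ bseq p n := by
  intro n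
  induction n using Nat.strong_induction_on with
  | _ n ih =>
    match n with
    | 0 => exact le_of_eq bseq_zero.symm
    | 1 =>
      rw [bseq_succ]
      simp only [Finset.range_zero, Finset.sum_empty, sub_zero]
      exact div_nonneg (hpos 1).le h0.le
    | (m + 2) =>
      rw [bseq_succ]
      apply div_nonneg _ h0.le
      rw [sub_nonneg]
      have hid := bseq_id h0 m
      have key : (∑ k ∈ Finset.range (m + 1), bseq p (k + 1) * p (m + 1 - k)) * p (m + 1)
          ≤ (∑ k ∈ Finset.range (m + 1), bseq p (k + 1) * p (m - k)) * p (m + 2) := by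
        rw [Finset.sum_mul, Finset.sum_mul]
        apply Finset.sum_le_sum
        intro k hk
        have hkm : k ≤ m := Nat.lt_succ_iff.mp (Finset.mem_range.mp hk)
        have hsub : m + 1 - k = (m - k) + 1 := by omega
        have hr := hrat (m - k) (m + 1) (by omega)
        have hbk : 0 ≤ bseq p (k + 1) := ih (k + 1) (by omega)
        rw [hsub]
        calc bseq p (k + 1) * p (m - k + 1) * p (m + 1)
            = bseq p (k + 1) * (p (m - k + 1) * p (m + 1)) := by ring
          _ ≤ bseq p (k + 1) * (p (m - k) * p (m + 2)) :=
              mul_le_mul_of_nonneg_left hr hbk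
          _ = bseq p (k + 1) * p (m - k) * p (m + 2) := by ring
      rw [hid] at key
      have hm1 := hpos (m + 1)
      calc ∑ k ∈ Finset.range (m + 1), bseq p (k + 1) * p (m + 1 - k)
          ≤ p (m + 1) * p (m + 2) / p (m + 1) := by
            rw [le_div_iff₀ hm1]
            linarith [key]
        _ = p (m + 2) := by field_simp

include h0 in
lemma bseq_le_div (hpnn : ∀ n, 0 ≤ p n) (hbnn : ∀ n, 0 ≤ bseq p n) :
    ∀ n, bseq p n ≤ p n / p 0 := by
  intro n
  cases n with
  | zero => rw [bseq_zero]; positivity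
  | succ m =>
    rw [bseq_succ]
    apply div_le_div_of_nonneg_right _ h0.le
    have : 0 ≤ ∑ k ∈ Finset.range m, bseq p (k + 1) * p (m - k) :=
      Finset.sum_nonneg fun k _ => mul_nonneg (hbnn _) (hpnn _)
    linarith

include h0 in
lemma bseq_summable (hpnn : ∀ n, 0 ≤ p n) (hbnn : ∀ n, 0 ≤ bseq p n) (hSp : Summable p) :
    Summable (bseq p) :=
  Summable.of_nonneg_of_le hbnn (bseq_le_div h0 hpnn hbnn) (hSp.div_const (p 0))

include h0 in
lemma p_eq_conv : ∀ n, p n = p 0 * (if n = 0 then 1 else 0) + seqConv (bseq p) p n := by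
  intro n
  cases n with
  | zero => simp [seqConv, bseq_zero]
  | succ m =>
    have : seqConv (bseq p) p (m + 1) = p (m + 1) := by
      rw [seqConv]
      rw [Finset.sum_range_succ']
      simp only [Nat.succ_sub_succ_eq_sub, bseq_zero, zero_mul, add_zero, Nat.sub_zero]
      exact bseq_id h0 m
    simp [this]

include h0 in
lemma bseq_tsum (hpnn : ∀ n, 0 ≤ p n) (hbnn : ∀ n, 0 ≤ bseq p n) (hSp : Summable p)
    (hpsum : ∑' n, p n = 1) : ∑' n, bseq p n = 1 - p 0 := by
  have hSb := bseq_summable h0 hpnn hbnn hSp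
  have hconv := conv_hasSum hbnn hpnn hSb hSp
  have hδ : HasSum (fun n : ℕ => p 0 * (if n = 0 then 1 else 0)) (p 0) := by
    simpa [mul_ite, mul_one, mul_zero] using hasSum_ite_eq (0 : ℕ) (p 0)
  have h2 := hδ.add hconv
  have heq : (fun n => p 0 * (if n = 0 then 1 else 0) + seqConv (bseq p) p n) = p :=
    funext fun n => (p_eq_conv h0 n).symm
  rw [heq, hpsum] at h2
  have h3 : HasSum p 1 := hpsum ▸ hSp.hasSum
  have := h3.unique h2
  linarith

end Bseq

section Fseq

variable {b : ℕ → ℝ} {r t : ℝ}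

lemma fseq_zero : fseq b r t 0 = r := by rw [fseq]

lemma fseq_succ (n : ℕ) :
    fseq b r t (n + 1) = t * ∑ k ∈ Finset.range (n + 1), b (k + 1) * fseq b r t (n - k) := by
  rw [fseq, ← Finset.sum_attach (Finset.range (n + 1)) (fun k => b (k + 1) * fseq b r t (n - k))]

lemma fseq_nonneg (hbnn : ∀ n, 0 ≤ b n) (hr : 0 ≤ r) (ht : 0 ≤ t) :
    ∀ n, 0 ≤ fseq b r t n := by
  intro n
  induction n using Nat.strong_induction_on with
  | _ n ih =>
    cases n with
    | zero => rw [fseq_zero]; exact hr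
    | succ m =>
      rw [fseq_succ]
      apply mul_nonneg ht
      apply Finset.sum_nonneg
      intro k hk
      exact mul_nonneg (hbnn _) (ih (m - k) (Nat.lt_succ_of_le (Nat.sub_le m k)))

lemma fseq_conv_id (hb0 : b 0 = 0) :
    ∀ n, fseq b r t n = r * (if n = 0 then 1 else 0) + t * seqConv b (fseq b r t) n := by
  intro n
  cases n with
  | zero => simp [seqConv, hb0, fseq_zero]
  | succ m =>
    have : seqConv b (fseq b r t) (m + 1)
        = ∑ k ∈ Finset.range (m + 1), b (k + 1) * fseq b r t (m - k) := by
      rw [seqConv, Finset.sum_range_succ']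
      simp [hb0]
    simp [this, fseq_succ]

lemma fseq_le (h0 : 0 < p 0) (hpnn : ∀ n, 0 ≤ p n) (ht0 : 0 ≤ t) (ht1 : t ≤ 1) (M : ℝ)
    (hM : 0 ≤ M) (hr : r = M * p 0) (hbnn : ∀ n, 0 ≤ bseq p n) :
    ∀ n, fseq (bseq p) r t n ≤ M * p n := by
  intro n
  induction n using Nat.strong_induction_on with
  | _ n ih =>
    cases n with
    | zero => rw [fseq_zero, hr]
    | succ m =>
      rw [fseq_succ]
      have hS : ∑ k ∈ Finset.range (m + 1), bseq p (k + 1) * fseq (bseq p) r t (m - k)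
          ≤ M * p (m + 1) := by
        calc ∑ k ∈ Finset.range (m + 1), bseq p (k + 1) * fseq (bseq p) r t (m - k)
            ≤ ∑ k ∈ Finset.range (m + 1), bseq p (k + 1) * (M * p (m - k)) := by
              apply Finset.sum_le_sum
              intro k hk
              exact mul_le_mul_of_nonneg_left
                (ih (m - k) (Nat.lt_succ_of_le (Nat.sub_le m k))) (hbnn _)
          _ = M * ∑ k ∈ Finset.range (m + 1), bseq p (k + 1) * p (m - k) := by
              rw [Finset.mul_sum]; apply Finset.sum_congr rfl; intro k _; ring
          _ = M * p (m + 1) := by rw [bseq_id h0]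
      have hSnn : 0 ≤ ∑ k ∈ Finset.range (m + 1), bseq p (k + 1) * fseq (bseq p) r t (m - k) :=
        Finset.sum_nonneg fun k _ => mul_nonneg (hbnn _)
          (fseq_nonneg hbnn (hr ▸ mul_nonneg hM (le_of_lt h0)) ht0 _)
      nlinarith

end Fseq

section Pow

lemma pmf_summable {f : ℕ → ℝ} (hf : IsPMF f) : Summable f := by
  obtain ⟨h1, h2⟩ := hf
  by_contra h
  rw [tsum_eq_zero_of_not_summable h] at h2
  exact one_ne_zero h2.symm

variable {f : ℕ → ℝ} (hf : IsPMF f)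

include hf in
lemma spow_nonneg : ∀ k n, 0 ≤ seqConvPow f k n := by
  intro k
  induction k with
  | zero => intro n; simp only [seqConvPow]; split <;> norm_num
  | succ m ih =>
    intro n
    simp only [seqConvPow, seqConv]
    exact Finset.sum_nonneg fun k _ => mul_nonneg (hf.1 _) (ih _)

include hf in
lemma spow_hasSum : ∀ k, HasSum (seqConvPow f k) 1 := by
  intro k
  induction k with
  | zero => simpa [seqConvPow] using hasSum_ite_eq (0 : ℕ) (1 : ℝ)
  | succ m ih =>
    have h := conv_hasSum hf.1 (spow_nonneg hf m) (pmf_summable hf) ih.summable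
    rw [hf.2, ih.tsum_eq, mul_one] at h
    exact h

include hf in
lemma spow_le_one : ∀ k n, seqConvPow f k n ≤ 1 := by
  intro k n
  have h := spow_hasSum hf k
  calc seqConvPow f k n ≤ ∑' m, seqConvPow f k m :=
        Summable.le_tsum h.summable n fun m _ => spow_nonneg hf k m
    _ = 1 := h.tsum_eq

lemma spow_one_eq : seqConvPow f 1 = f := by
  funext n
  show seqConv f (seqConvPow f 0) n = f n
  rw [seqConv]
  have hc : ∀ k ∈ Finset.range (n + 1),
      f k * seqConvPow f 0 (n - k) = if k = n then f k else 0 := by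
    intro k hk
    have hk' : k ≤ n := Nat.lt_succ_iff.mp (Finset.mem_range.mp hk)
    simp only [seqConvPow]
    by_cases h : k = n
    · subst h; simp
    · have : n - k ≠ 0 := by omega
      simp [h, this]
  rw [Finset.sum_congr rfl hc, Finset.sum_ite_eq' (Finset.range (n + 1)) n f]
  simp

variable {θ : ℝ} (hθ0 : 0 < θ) (hθ1 : θ < 1)

include hf hθ0 hθ1 in
lemma gc_summand_summable (n : ℕ) :
    Summable (fun j : ℕ => θ * (1 - θ) ^ j * seqConvPow f (j + 1) n) := by
  apply Summable.of_nonneg_of_le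
      (fun j => mul_nonneg (mul_nonneg hθ0.le (pow_nonneg (by linarith) j)) (spow_nonneg hf _ _))
      (fun j => ?_)
      (((summable_geometric_of_lt_one (r := 1 - θ) (by linarith) (by linarith))).mul_left θ)
  calc θ * (1 - θ) ^ j * seqConvPow f (j + 1) n ≤ θ * (1 - θ) ^ j * 1 := by
        apply mul_le_mul_of_nonneg_left (spow_le_one hf _ _)
          (mul_nonneg hθ0.le (pow_nonneg (by linarith) j))
    _ = θ * (1 - θ) ^ j := by ring
  
include hf hθ0 hθ1 in
lemma gc_rec (n : ℕ) :
    geomCompound θ f n = θ * f n + (1 - θ) * seqConv f (geomCompound θ f) n := by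
  have hsumm := fun m => gc_summand_summable hf hθ0 hθ1 m
  rw [geomCompound]
  rw [Summable.tsum_eq_zero_add (hsumm n)]
  congr 1
  · simp [spow_one_eq]
  · have hterm : ∀ j : ℕ, θ * (1 - θ) ^ (j + 1) * seqConvPow f (j + 1 + 1) n
        = ∑ k ∈ Finset.range (n + 1),
            ((1 - θ) * f k) * (θ * (1 - θ) ^ j * seqConvPow f (j + 1) (n - k)) := by
      intro j
      have : seqConvPow f (j + 1 + 1) n = seqConv f (seqConvPow f (j + 1)) n := rfl
      rw [this, seqConv, Finset.mul_sum]
      apply Finset.sum_congr rfl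
      intro k _
      ring
    rw [tsum_congr hterm,
      Summable.tsum_finsetSum (fun k _ => (hsumm (n - k)).mul_left ((1 - θ) * f k))]
    rw [seqConv, Finset.mul_sum]
    apply Finset.sum_congr rfl
    intro k _
    rw [tsum_mul_left]
    rw [geomCompound]
    ring

end Pow

lemma coeff_mk_mul (a b : ℕ → ℝ) (n : ℕ) :
    (PowerSeries.coeff n) (PowerSeries.mk a * PowerSeries.mk b) = seqConv a b n := by
  rw [PowerSeries.coeff_mul, Finset.Nat.sum_antidiagonal_eq_sum_range_succ_mk]
  simp [seqConv]

end Stmt15Aux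

end

open Stmt15Aux in
/-- A log-convex distribution (p_n) on ℕ with 0 < p₀ < 1 is g.i.d. -/
theorem stmt15 (p : ℕ → ℝ) (hp : IsPMF p) (h0 : 0 < p 0) (h1 : p 0 < 1)
    (hlc : ∀ n : ℕ, p (n + 1) ^ 2 ≤ p n * p (n + 2)) :
    GID p := by
  obtain ⟨hpnn, hpsum⟩ := hp
  have hSp : Summable p := pmf_summable ⟨hpnn, hpsum⟩
  have hpos : ∀ n, 0 < p n := p_pos hpnn hpsum h0 h1 hlc
  have hrat := ratio_mono hpnn h0 h1 hlc hpos
  have hbnn := bseq_nonneg h0 hpos hrat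
  have hSb := bseq_summable h0 hpnn hbnn hSp
  have hbt : ∑' n, bseq p n = 1 - p 0 := bseq_tsum h0 hpnn hbnn hSp hpsum
  intro θ hθ
  obtain ⟨hθ0, hθ1⟩ := hθ
  set c : ℝ := θ + (1 - θ) * p 0 with hc_def
  have hc : 0 < c := by nlinarith
  set r : ℝ := p 0 / c with hr_def
  set t : ℝ := θ / c with ht_def
  have hrc : r * c = p 0 := div_mul_cancel₀ _ hc.ne'
  have htc : t * c = θ := div_mul_cancel₀ _ hc.ne'
  have hr0 : 0 < r := div_pos h0 hc
  have ht0 : 0 < t := div_pos hθ0 hc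
  have ht1 : t ≤ 1 := by rw [ht_def, div_le_one hc]; nlinarith
  set f : ℕ → ℝ := fseq (bseq p) r t with hf_def
  have hfnn : ∀ n, 0 ≤ f n := fseq_nonneg hbnn hr0.le ht0.le
  have hfle : ∀ n, f n ≤ (1 / c) * p n :=
    fseq_le h0 hpnn ht0.le ht1 (1 / c) (by positivity) (by rw [hr_def]; ring) hbnn
  have hSf : Summable f := Summable.of_nonneg_of_le hfnn hfle (hSp.mul_left _)
  have hfid := fseq_conv_id (b := bseq p) (r := r) (t := t) bseq_zero
  -- total mass of f is 1
  have hconvf := conv_hasSum hbnn hfnn hSb hSf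
  have hδ : HasSum (fun n : ℕ => r * (if n = 0 then 1 else 0)) r := by
    simpa [mul_ite, mul_one, mul_zero] using hasSum_ite_eq (0 : ℕ) r
  have h2 := hδ.add (hconvf.mul_left t)
  have heq : (fun n => r * (if n = 0 then 1 else 0) + t * seqConv (bseq p) f n) = f :=
    funext fun n => (hfid n).symm
  rw [heq, hbt] at h2
  have hkey : ∑' n, f n = r + t * ((1 - p 0) * ∑' n, f n) := hSf.hasSum.unique h2
  have hfsum : ∑' n, f n = 1 := by
    have h6 : (∑' n, f n) * p 0 = p 0 := by
      linear_combination c * hkey + hrc + (1 - p 0) * (∑' n, f n) * htc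
        - (∑' n, f n) * hc_def
    have : (∑' n, f n) * p 0 = 1 * p 0 := by rw [h6, one_mul]
    exact mul_right_cancel₀ h0.ne' this
  have hfpmf : IsPMF f := ⟨hfnn, hfsum⟩
  refine ⟨f, hfpmf, ?_⟩
  have hgrec := gc_rec hfpmf hθ0 hθ1
  -- power series bookkeeping
  have hP : PowerSeries.mk p
      = PowerSeries.C (p 0) + PowerSeries.mk (bseq p) * PowerSeries.mk p := by
    ext n
    have hn := p_eq_conv h0 n
    simp only [map_add, PowerSeries.coeff_mk, PowerSeries.coeff_C, coeff_mk_mul]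
    rw [hn]
    by_cases h : n = 0 <;> simp [h]
  have hF : PowerSeries.mk f
      = PowerSeries.C r
        + PowerSeries.C t * (PowerSeries.mk (bseq p) * PowerSeries.mk f) := by
    ext n
    have hn := hfid n
    simp only [map_add, PowerSeries.coeff_mk, PowerSeries.coeff_C, PowerSeries.coeff_C_mul,
      coeff_mk_mul]
    rw [hf_def, hn]
    by_cases h : n = 0 <;> simp [h]
  have hG : PowerSeries.mk (geomCompound θ f)
      = PowerSeries.C θ * PowerSeries.mk f
        + PowerSeries.C (1 - θ) * (PowerSeries.mk f * PowerSeries.mk (geomCompound θ f)) := by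
    ext n
    have hn := hgrec n
    simp only [map_add, PowerSeries.coeff_mk, PowerSeries.coeff_C_mul, coeff_mk_mul]
    rw [hn]
  set B := PowerSeries.mk (bseq p) with hB_def
  set F := PowerSeries.mk f with hF_def'
  set G := PowerSeries.mk (geomCompound θ f) with hG_def
  set P := PowerSeries.mk p with hP_def
  have e1 : (1 - PowerSeries.C t * B) * F = PowerSeries.C r := by linear_combination hF
  have e2 : (1 - PowerSeries.C (1 - θ) * F) * G = PowerSeries.C θ * F := by
    linear_combination hG
  have e4 : (1 - B) * P = PowerSeries.C (p 0) := by linear_combination hP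
  have hv : PowerSeries.C t = 1 - PowerSeries.C (1 - θ) * PowerSeries.C r := by
    have hreal : t = 1 - (1 - θ) * r := by
      have h7 : (t - (1 - (1 - θ) * r)) * c = 0 := by
        linear_combination htc + (1 - θ) * hrc - hc_def
      rcases mul_eq_zero.mp h7 with h | h
      · linarith [sub_eq_zero.mp h]
      · exact absurd h hc.ne'
    rw [hreal, map_sub, map_mul, map_one]
  have huw : PowerSeries.C θ * PowerSeries.C r
      = PowerSeries.C t * PowerSeries.C (p 0) := by
    rw [← map_mul, ← map_mul]
    congr 1
    rw [hr_def, ht_def]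
    ring
  have e3 : PowerSeries.C t * ((1 - B) * G) = PowerSeries.C t * PowerSeries.C (p 0) := by
    linear_combination (1 - PowerSeries.C t * B) * e2
      + (PowerSeries.C θ + PowerSeries.C (1 - θ) * G) * e1 + G * hv + huw
  have hCt : (PowerSeries.C t) ≠ 0 := by
    intro h
    have h' := congrArg (PowerSeries.constantCoeff) h
    simp only [PowerSeries.constantCoeff_C, map_zero] at h'
    exact ht0.ne' h'
  have e3' : (1 - B) * G = PowerSeries.C (p 0) := mul_left_cancel₀ hCt e3
  have e5 : (1 - B) * (G - P) = 0 := by linear_combination e3' - e4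
  have hBne : (1 - B) ≠ 0 := by
    intro h
    have h' := congrArg (PowerSeries.constantCoeff) h
    simp only [map_sub, map_one, map_zero, hB_def, PowerSeries.constantCoeff_mk,
      bseq_zero] at h'
    norm_num at h'
  have hGP : G = P := by
    rcases mul_eq_zero.mp e5 with h | h
    · exact absurd h hBne
    · exact sub_eq_zero.mp h
  intro n
  have hco := congrArg (PowerSeries.coeff n) hGP
  simp only [hG_def, hP_def, PowerSeries.coeff_mk] at hco
  exact hco.symm
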